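/- Let T be a tree, v a leaf of T and let v1 x1 x2 ... xn v2 be a path between leaves with components X_1,...,X_n attached. The total number of subtrees of T equals the number of subtrees containing no path vertex (i.e., subtrees lying inside some X_i minus its root x_i, counted appropriately) plus, for each pair 1 ≤ i ≤ j ≤ n, the number of subtrees whose intersection with the path is exactly x_i x_{i+1} ... x_j, which equals Π_{m=i}^{j} C_m where C_m = f_{x_m}(X_m). In particular, f(T) = Σ_{1 ≤ i ≤ j ≤ n} Π_{m=i}^{j} C_m + Σ_{m=1}^{n} (f(X_m) - C_m). -/

import Mathlib

open SimpleGraph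

open SimpleGraph

/-- The total number of subtrees of `G`. -/
noncomputable def numSubtrees {V : Type*} [Fintype V] (G : SimpleGraph V) : ℕ :=
  Set.ncard {s : Set V | s.Nonempty ∧ (G.induce s).Connected}

/-- The number of subtrees of `G` lying inside the vertex set `A` and containing `u`. -/
noncomputable def numSubtreesIn {V : Type*} [Fintype V] (G : SimpleGraph V)
    (A : Set V) (u : V) : ℕ :=
  Set.ncard {s : Set V | u ∈ s ∧ s ⊆ A ∧ (G.induce s).Connected}

/-- The number of subtrees of `G` lying inside the vertex set `A`. -/
noncomputable def numSubtreesInSet {V : Type*} [Fintype V] (G : SimpleGraph V)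
    (A : Set V) : ℕ :=
  Set.ncard {s : Set V | s.Nonempty ∧ s ⊆ A ∧ (G.induce s).Connected}

/-- The set of vertices reachable from `u` in `G`. -/
def reachSet {V : Type*} (G : SimpleGraph V) (u : V) : Set V :=
  {v | G.Reachable u v}


section Helpers
variable {V : Type*} {T : SimpleGraph V}

lemma aux_reachable_induce_of_walk {A : Set V} :
    ∀ {u v : V} (p : T.Walk u v), (∀ w ∈ p.support, w ∈ A) →
      ∀ (hu : u ∈ A) (hv : v ∈ A), (T.induce A).Reachable ⟨u, hu⟩ ⟨v, hv⟩ := by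
  intro u v p
  induction p with
  | nil => intro _ hu hv; rfl
  | @cons a b c h q ih =>
    intro hsup hu hv
    have hw : b ∈ A := hsup b (by simp)
    refine Reachable.trans ?_ (ih (fun w hw' => hsup w (by simp [hw'])) hw hv)
    exact Adj.reachable (by simpa using h)

lemma aux_exists_walk_of_induce_reachable {A : Set V} {a b : ↥A}
    (h : (T.induce A).Reachable a b) : ∃ p : T.Walk a.1 b.1, ∀ w ∈ p.support, w ∈ A := by
  obtain ⟨q⟩ := h
  induction q with
  | nil => exact ⟨Walk.nil, by simp⟩
  | cons h q ih =>
    obtain ⟨p, hp⟩ := ih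
    refine ⟨Walk.cons (by simpa using h) p, ?_⟩
    intro w hw
    rcases (by simpa using hw : w = _ ∨ w ∈ p.support) with rfl | hw'
    · exact Subtype.coe_prop _
    · exact hp w hw'

lemma aux_connected_induce_iff {A : Set V} :
    (T.induce A).Connected ↔ A.Nonempty ∧
      ∀ u ∈ A, ∀ v ∈ A, ∃ p : T.Walk u v, ∀ w ∈ p.support, w ∈ A := by
  constructor
  · intro hc
    refine ⟨?_, fun u hu v hv => aux_exists_walk_of_induce_reachable (hc.preconnected ⟨u, hu⟩ ⟨v, hv⟩)⟩
    obtain ⟨⟨a, ha⟩⟩ := hc.nonempty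
    exact ⟨a, ha⟩
  · rintro ⟨⟨a, ha⟩, h⟩
    have : Nonempty ↥A := ⟨⟨a, ha⟩⟩
    refine ⟨fun u v => ?_⟩
    obtain ⟨p, hp⟩ := h u u.2 v v.2
    have := aux_reachable_induce_of_walk (T := T) p hp u.2 v.2
    simpa using this

def pathW (T : SimpleGraph V) (x : ℕ → V) :
    (i d : ℕ) → (∀ a, i ≤ a → a < i + d → T.Adj (x a) (x (a + 1))) → T.Walk (x i) (x (i + d))
  | _, 0, _ => SimpleGraph.Walk.nil
  | i, d + 1, h =>
    (pathW T x i d (fun a ha hb => h a ha (by omega))).concat (h (i + d) (by omega) (by omega))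

lemma pathW_support (T : SimpleGraph V) (x : ℕ → V) :
    ∀ (i d : ℕ) (h : ∀ a, i ≤ a → a < i + d → T.Adj (x a) (x (a + 1))),
      (pathW T x i d h).support = (List.range (d + 1)).map (fun a => x (i + a)) := by
  intro i d
  induction d with
  | zero => intro h; simp [pathW, List.range_succ]
  | succ d ih =>
    intro h
    rw [pathW, SimpleGraph.Walk.support_concat, ih, List.range_succ,
      List.range_succ (n := d + 1), List.range_succ]
    simp

lemma pathW_isPath (T : SimpleGraph V) (x : ℕ → V) {n : ℕ}
    (hinj : Set.InjOn x (Set.Icc 0 (n + 1))) (i d : ℕ) (hd : i + d ≤ n + 1)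
    (h : ∀ a, i ≤ a → a < i + d → T.Adj (x a) (x (a + 1))) : (pathW T x i d h).IsPath := by
  rw [SimpleGraph.Walk.isPath_def, pathW_support]
  refine List.Nodup.map_on ?_ List.nodup_range
  intro a ha b hb hab
  simp only [List.mem_range] at ha hb
  have := hinj (by simp; omega : i + a ∈ Set.Icc 0 (n+1)) (by simp; omega : i + b ∈ Set.Icc 0 (n+1)) hab
  omega

lemma ncard_pi_univ {ι : Type*} [Fintype ι] {β : ι → Type*} (t : ∀ i, Set (β i)) :
    (Set.univ.pi t).ncard = ∏ i, (t i).ncard := by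
  rw [← Nat.card_coe_set_eq, Nat.card_congr (Equiv.Set.univPi t), Nat.card_pi]
  simp [Nat.card_coe_set_eq]

lemma ncard_biUnion_finset {α ι : Type*} [Finite α] (I : Finset ι) (f : ι → Set α)
    (h : ∀ i ∈ I, ∀ j ∈ I, i ≠ j → Disjoint (f i) (f j)) :
    (⋃ i ∈ I, f i).ncard = ∑ i ∈ I, (f i).ncard := by
  classical
  induction I using Finset.induction_on with
  | empty => simp
  | @insert a I' ha ih =>
    rw [Finset.set_biUnion_insert, Finset.sum_insert ha,
      Set.ncard_union_eq ?dis (Set.toFinite _) (Set.toFinite _),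
      ih (fun i hi j hj hij => h i (Finset.mem_insert_of_mem hi) j (Finset.mem_insert_of_mem hj) hij)]
    case dis =>
      rw [Set.disjoint_left]
      intro v hv hv'
      obtain ⟨i, hi, hvi⟩ := Set.mem_iUnion₂.mp hv'
      have hai : a ≠ i := fun hh => ha (hh ▸ hi)
      exact (Set.disjoint_left.mp
        (h a (Finset.mem_insert_self _ _) i (Finset.mem_insert_of_mem hi) hai)) hv hvi

end Helpers
theorem subtree_path_decomposition {V : Type*} [Fintype V] (T : SimpleGraph V)
    [DecidableRel T.Adj] (hT : T.IsTree) (n : ℕ) (hn : 1 ≤ n) (x : ℕ → V)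
    (hadj : ∀ i ≤ n, T.Adj (x i) (x (i + 1)))
    (hinj : Set.InjOn x (Set.Icc 0 (n + 1)))
    (hleaf₁ : T.degree (x 0) = 1) (hleaf₂ : T.degree (x (n + 1)) = 1)
    (C FX : ℕ → ℕ)
    (hC : ∀ m ∈ Finset.Icc 1 n, C m =
      numSubtreesIn T
        (reachSet (T.deleteEdges {e | ∃ i, 1 ≤ i ∧ i < n ∧ e = s(x i, x (i + 1))}) (x m))
        (x m))
    (hFX : ∀ m ∈ Finset.Icc 1 n, FX m =
      numSubtreesInSet T
        (reachSet (T.deleteEdges {e | ∃ i, 1 ≤ i ∧ i < n ∧ e = s(x i, x (i + 1))}) (x m))) :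
    numSubtrees T =
      (∑ i ∈ Finset.Icc 1 n, ∑ j ∈ Finset.Icc i n, ∏ m ∈ Finset.Icc i j, C m) +
        ∑ m ∈ Finset.Icc 1 n, (FX m - C m) := by
  classical
  set E : Set (Sym2 V) := {e | ∃ i, 1 ≤ i ∧ i < n ∧ e = s(x i, x (i + 1))} with hE
  set T' : SimpleGraph V := T.deleteEdges E with hT'def
  set X : ℕ → Set V := fun m => reachSet T' (x m) with hXdef
  have hXmem : ∀ m v, v ∈ X m ↔ T'.Reachable (x m) v := by
    intro m v
    rw [hXdef]
    rfl
  have hxne : ∀ a b, a ≤ n + 1 → b ≤ n + 1 → x a = x b → a = b := by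
    intro a b ha hb hab
    exact hinj (Set.mem_Icc.mpr ⟨Nat.zero_le _, ha⟩) (Set.mem_Icc.mpr ⟨Nat.zero_le _, hb⟩) hab
  have hxX : ∀ m, x m ∈ X m := fun m => (hXmem m (x m)).mpr (Reachable.refl _)
  have hT'le : T' ≤ T := deleteEdges_le E
  have hT'adj : ∀ {u v : V}, T.Adj u v → s(u, v) ∉ E → T'.Adj u v := by
    intro u v h h'
    rw [hT'def]
    exact deleteEdges_adj.mpr ⟨h, h'⟩
  have hchain : ∀ (G : SimpleGraph V) (i j : ℕ), i ≤ j →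
      (∀ a, i ≤ a → a < j → G.Adj (x a) (x (a + 1))) → G.Reachable (x i) (x j) := by
    intro G i j hij
    induction j, hij using Nat.le_induction with
    | base => exact fun _ => Reachable.refl _
    | succ j hij ih =>
      intro h
      exact (ih (fun a ha hb => h a ha (by omega))).trans (Adj.reachable (h j hij (by omega)))
  -- no reachability between distinct path vertices after deletion
  have hnr : ∀ k m, 1 ≤ k → k < m → m ≤ n → ¬ T'.Reachable (x k) (x m) := by
    intro k m hk hkm hmn hreach
    have hbr : T.IsBridge s(x k, x (k + 1)) :=
      (isAcyclic_iff_forall_adj_isBridge.mp hT.IsAcyclic) (hadj k (by omega))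
    rw [isBridge_iff] at hbr
    refine hbr ?_
    have heq : T \ fromEdgeSet {s(x k, x (k + 1))} = T.deleteEdges {s(x k, x (k + 1))} := rfl
    have hle : T' ≤ T.deleteEdges {s(x k, x (k + 1))} := by
      rw [hT'def]
      refine deleteEdges_anti ?_
      intro e he
      rw [Set.mem_singleton_iff] at he
      exact ⟨k, hk, by omega, he⟩
    have h1 : (T.deleteEdges {s(x k, x (k + 1))}).Reachable (x k) (x m) := hreach.mono hle
    have h2 : (T.deleteEdges {s(x k, x (k + 1))}).Reachable (x (k + 1)) (x m) := by
      refine hchain _ (k + 1) m hkm ?_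
      intro a ha hb
      rw [deleteEdges_adj]
      refine ⟨hadj a (by omega), ?_⟩
      rw [Set.mem_singleton_iff, Sym2.eq_iff]
      rintro (⟨h1', h2'⟩ | ⟨h1', h2'⟩)
      · have := hxne a k (by omega) (by omega) h1'
        omega
      · have := hxne a (k + 1) (by omega) (by omega) h1'
        have := hxne (a + 1) k (by omega) (by omega) h2'
        omega
    exact h1.trans h2.symm
  have hXd : ∀ k m, 1 ≤ k → k ≤ n → 1 ≤ m → m ≤ n → k ≠ m →
      ∀ v, v ∈ X k → v ∈ X m → False := by
    intro k m hk1 hk2 hm1 hm2 hkm v hvk hvm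
    have hr : T'.Reachable (x k) (x m) := ((hXmem k v).mp hvk).trans ((hXmem m v).mp hvm).symm
    rcases Nat.lt_or_ge k m with h | h
    · exact hnr k m hk1 h hm2 hr
    · exact hnr m k hm1 (by omega) hk2 hr.symm
  have hxmem : ∀ k m, 1 ≤ k → k ≤ n → 1 ≤ m → m ≤ n → x k ∈ X m → k = m := by
    intro k m hk1 hk2 hm1 hm2 hmem
    by_contra h
    exact hXd k m hk1 hk2 hm1 hm2 h (x k) (hxX k) hmem
  -- every vertex lies in some component
  have hcov : ∀ v, ∃ m, 1 ≤ m ∧ m ≤ n ∧ v ∈ X m := by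
    intro v
    obtain ⟨p⟩ := hT.isConnected.preconnected (x 1) v
    have aux : ∀ {u w : V} (p : T.Walk u w), (∃ m, 1 ≤ m ∧ m ≤ n ∧ u ∈ X m) →
        ∃ m, 1 ≤ m ∧ m ≤ n ∧ w ∈ X m := by
      intro u w p
      induction p with
      | nil => exact id
      | @cons a b c hab q ih =>
        rintro ⟨m, hm1, hm2, hma⟩
        by_cases he : s(a, b) ∈ E
        · obtain ⟨i, hi1, hi2, hie⟩ := he
          rcases Sym2.eq_iff.mp hie with ⟨-, hb⟩ | ⟨-, hb⟩
          · exact ih ⟨i + 1, by omega, by omega, hb ▸ hxX (i + 1)⟩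
          · exact ih ⟨i, by omega, by omega, hb ▸ hxX i⟩
        · exact ih ⟨m, hm1, hm2, (hXmem m b).mpr (((hXmem m a).mp hma).trans (Adj.reachable (hT'adj hab he)))⟩
    exact aux p ⟨1, le_rfl, hn, hxX 1⟩
  -- entry lemma
  have hL1 : ∀ k, 1 ≤ k → k ≤ n → ∀ {u v : V} (p : T.Walk u v),
      u ∉ X k → v ∈ X k → x k ∈ p.support := by
    intro k hk1 hk2 u v p
    induction p with
    | nil => exact fun hu hv => absurd hv hu
    | @cons a b c hab q ih =>
      intro ha hv
      by_cases hb : b ∈ X k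
      · by_cases he : s(a, b) ∈ E
        · obtain ⟨i, hi1, hi2, hie⟩ := he
          rcases Sym2.eq_iff.mp hie with ⟨-, hbx⟩ | ⟨-, hbx⟩
          · have hik : i + 1 = k := hxmem (i + 1) k (by omega) (by omega) hk1 hk2 (hbx ▸ hb)
            rw [Walk.support_cons]
            refine List.mem_cons_of_mem _ ?_
            rw [← hik, ← hbx]
            exact q.start_mem_support
          · have hik : i = k := hxmem i k (by omega) (by omega) hk1 hk2 (hbx ▸ hb)
            rw [Walk.support_cons]
            refine List.mem_cons_of_mem _ ?_
            rw [← hik, ← hbx]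
            exact q.start_mem_support
        · exact absurd ((hXmem k a).mpr (((hXmem k b).mp hb).trans (Adj.reachable (hT'adj hab he)).symm)) ha
      · rw [Walk.support_cons]
        exact List.mem_cons_of_mem _ (ih hb hv)
  -- canonical path
  have hcan : ∀ i j, i ≤ j → j ≤ n + 1 → ∃ q : T.Walk (x i) (x j), q.IsPath ∧
      ∀ m, i ≤ m → m ≤ j → x m ∈ q.support := by
    intro i j hij hj
    obtain ⟨d, rfl⟩ : ∃ d, j = i + d := ⟨j - i, by omega⟩
    have hadj' : ∀ a, i ≤ a → a < i + d → T.Adj (x a) (x (a + 1)) :=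
      fun a ha hb => hadj a (by omega)
    refine ⟨pathW T x i d hadj', pathW_isPath T x hinj i d (by omega) hadj', ?_⟩
    intro m hm1 hm2
    rw [pathW_support]
    exact List.mem_map.mpr ⟨m - i, List.mem_range.mpr (by omega), by congr 1; omega⟩
  -- interval lemma
  have hIv : ∀ s : Set V, (T.induce s).Connected → ∀ i j m, i ≤ m → m ≤ j → j ≤ n + 1 →
      x i ∈ s → x j ∈ s → x m ∈ s := by
    intro s hconn i j m him hmj hj hxi hxj
    obtain ⟨-, hwalk⟩ := aux_connected_induce_iff.mp hconn
    obtain ⟨p, hp⟩ := hwalk (x i) hxi (x j) hxj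
    obtain ⟨q, hq, hqmem⟩ := hcan i j (by omega) hj
    have hq' : q = p.bypass := (hT.existsUnique_path (x i) (x j)).unique hq p.bypass_isPath
    have hmem := hqmem m him hmj
    rw [hq'] at hmem
    exact hp _ (p.support_bypass_subset hmem)
  -- unique path between vertices of a component stays in it
  have hUX : ∀ m (u v : V), u ∈ X m → v ∈ X m → ∀ (p : T.Walk u v), p.IsPath →
      ∀ w ∈ p.support, w ∈ X m := by
    intro m u v hu hv p hp w hw
    obtain ⟨q⟩ := ((hXmem m u).mp hu).symm.trans ((hXmem m v).mp hv)
    have hqT : ∀ e ∈ q.edges, e ∈ T.edgeSet :=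
      fun e he => (edgeSet_mono hT'le) (q.edges_subset_edgeSet he)
    have hpq : p = (q.transfer T hqT).bypass :=
      (hT.existsUnique_path u v).unique hp (Walk.bypass_isPath _)
    have hw' : w ∈ (q.transfer T hqT).support :=
      (q.transfer T hqT).support_bypass_subset (hpq ▸ hw)
    rw [Walk.support_transfer] at hw'
    obtain ⟨q1, q2, -⟩ := Walk.mem_support_iff_exists_append.mp hw'
    exact (hXmem m w).mpr (((hXmem m u).mp hu).trans ⟨q1⟩)
  -- the class sets
  set Tset : ℕ → Set (Set V) :=
    fun m => {t | x m ∈ t ∧ t ⊆ X m ∧ (T.induce t).Connected} with hTsetdef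
  set R : ℕ → Set (Set V) :=
    fun m => {s | s.Nonempty ∧ s ⊆ X m ∧ (T.induce s).Connected ∧ x m ∉ s} with hRdef
  set SS : ℕ → ℕ → Set (Set V) := fun i j =>
    {s | (T.induce s).Connected ∧ ∀ m, 1 ≤ m → m ≤ n → (x m ∈ s ↔ i ≤ m ∧ m ≤ j)} with hSSdef
  have hCval : ∀ m ∈ Finset.Icc 1 n, C m = (Tset m).ncard := by
    intro m hm
    rw [hC m hm]
    rfl
  have hRval : ∀ m ∈ Finset.Icc 1 n, (R m).ncard = FX m - C m := by
    intro m hm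
    have hdiff : R m = {s : Set V | s.Nonempty ∧ s ⊆ X m ∧ (T.induce s).Connected} \ Tset m := by
      ext s
      constructor
      · rintro ⟨h1, h2, h3, h4⟩
        exact ⟨⟨h1, h2, h3⟩, fun hc => h4 hc.1⟩
      · rintro ⟨⟨h1, h2, h3⟩, hns⟩
        exact ⟨h1, h2, h3, fun hx => hns ⟨hx, h2, h3⟩⟩
    have hsub : Tset m ⊆ {s : Set V | s.Nonempty ∧ s ⊆ X m ∧ (T.induce s).Connected} := by
      rintro s ⟨h1, h2, h3⟩
      exact ⟨⟨x m, h1⟩, h2, h3⟩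
    rw [hdiff, Set.ncard_diff hsub, ← hCval m hm]
    congr 1
    rw [hFX m hm]
    rfl
  -- counting SS i j
  have hSijcard : ∀ i j, 1 ≤ i → i ≤ j → j ≤ n →
      (SS i j).ncard = ∏ m ∈ Finset.Icc i j, C m := by
    intro i j hi1 hij hjn
    have hi_n : i ≤ n := le_trans hij hjn
    set ts : ↥(Finset.Icc i j) → Set (Set V) := fun m => Tset ↑m with hts
    set φ : Set V → (↥(Finset.Icc i j) → Set V) := fun s m => s ∩ X ↑m with hφ
    have hbound : ∀ (m : ↥(Finset.Icc i j)), i ≤ (m : ℕ) ∧ (m : ℕ) ≤ j := by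
      intro m
      exact Finset.mem_Icc.mp m.2
    -- every vertex of s ∈ SS i j lies in X m for some m ∈ [i, j]
    have hsubU : ∀ s ∈ SS i j, ∀ v ∈ s, ∃ m, i ≤ m ∧ m ≤ j ∧ v ∈ X m := by
      rintro s ⟨hconn, hcond⟩ v hv
      obtain ⟨k, hk1, hk2, hvk⟩ := hcov v
      refine ⟨k, ?_, ?_, hvk⟩ <;> (
        by_contra hc
        have hxk : x k ∉ s := fun hxk => by
          have := (hcond k hk1 hk2).mp hxk
          omega
        have hxi : x i ∈ s := (hcond i hi1 hi_n).mpr ⟨le_rfl, hij⟩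
        obtain ⟨-, hwalk⟩ := aux_connected_induce_iff.mp hconn
        obtain ⟨p, hp⟩ := hwalk (x i) hxi v hv
        have hxinot : x i ∉ X k := by
          intro hmem
          have hik : i = k := hxmem i k hi1 hi_n hk1 hk2 hmem
          exact hxk (hik ▸ hxi)
        exact hxk (hp _ (hL1 k hk1 hk2 p hxinot hvk)))
    have hmaps : ∀ s ∈ SS i j, ∀ m : ↥(Finset.Icc i j), φ s m ∈ ts m := by
      rintro s ⟨hconn, hcond⟩ m
      obtain ⟨hm1, hm2⟩ := hbound m
      have hxm : x ↑m ∈ s := (hcond ↑m (by omega) (by omega)).mpr ⟨hm1, hm2⟩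
      refine ⟨⟨hxm, hxX _⟩, Set.inter_subset_right, ?_⟩
      rw [aux_connected_induce_iff]
      refine ⟨⟨x ↑m, hxm, hxX _⟩, ?_⟩
      rintro u ⟨hus, huX⟩ v ⟨hvs, hvX⟩
      obtain ⟨-, hwalk⟩ := aux_connected_induce_iff.mp hconn
      obtain ⟨p, hp⟩ := hwalk u hus v hvs
      exact ⟨p.bypass, fun w hw => ⟨hp _ (p.support_bypass_subset hw),
        hUX ↑m u v huX hvX p.bypass p.bypass_isPath w hw⟩⟩
    have hinj2 : Set.InjOn φ (SS i j) := by
      have key : ∀ s ∈ SS i j, ∀ s' ∈ SS i j, φ s = φ s' → s ⊆ s' := by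
        intro s hs s' hs' hφeq v hv
        obtain ⟨m, hm1, hm2, hvm⟩ := hsubU s hs v hv
        have hmem : (⟨m, Finset.mem_Icc.mpr ⟨hm1, hm2⟩⟩ : ↥(Finset.Icc i j)) ∈ Set.univ :=
          Set.mem_univ _
        have : v ∈ φ s ⟨m, Finset.mem_Icc.mpr ⟨hm1, hm2⟩⟩ := ⟨hv, hvm⟩
        rw [hφeq] at this
        exact this.1
      intro s hs s' hs' hφeq
      exact Set.Subset.antisymm (key s hs s' hs' hφeq) (key s' hs' s hs hφeq.symm)
    have hsurj : ∀ t ∈ Set.univ.pi ts, ∃ s ∈ SS i j, φ s = t := by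
      intro t ht
      set t'' : ℕ → Set V := fun m => if h : m ∈ Finset.Icc i j then t ⟨m, h⟩ else ∅ with ht''def
      have ht''eq : ∀ m (h : m ∈ Finset.Icc i j), t'' m = t ⟨m, h⟩ := by
        intro m h
        simp only [ht''def]
        exact dif_pos h
      have htm : ∀ m (h : m ∈ Finset.Icc i j),
          x m ∈ t'' m ∧ t'' m ⊆ X m ∧ (T.induce (t'' m)).Connected := by
        intro m h
        rw [ht''eq m h]
        have h2 := ht ⟨m, h⟩ (Set.mem_univ _)
        rw [hts] at h2
        exact h2
      -- walks to x i inside partial unions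
      have hwx : ∀ j', i ≤ j' → j' ≤ j → ∀ u ∈ ⋃ m ∈ Finset.Icc i j', t'' m,
          ∃ p : T.Walk u (x i), ∀ w ∈ p.support, w ∈ ⋃ m ∈ Finset.Icc i j', t'' m := by
        intro j' hij'
        induction j', hij' using Nat.le_induction with
        | base =>
          intro hle u hu
          rw [Finset.Icc_self, Finset.set_biUnion_singleton] at hu ⊢
          have hii : i ∈ Finset.Icc i j := Finset.mem_Icc.mpr ⟨le_rfl, hij⟩
          obtain ⟨hx1, hx2, hx3⟩ := htm i hii
          obtain ⟨-, hwalk⟩ := aux_connected_induce_iff.mp hx3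
          exact hwalk u hu (x i) hx1
        | succ j' hij' ih =>
          intro hle u hu
          have hUsub : (⋃ m ∈ Finset.Icc i j', t'' m) ⊆ ⋃ m ∈ Finset.Icc i (j' + 1), t'' m := by
            intro w hw
            obtain ⟨k, hk, hw'⟩ := Set.mem_iUnion₂.mp hw
            have hk' := Finset.mem_Icc.mp hk
            exact Set.mem_biUnion (Finset.mem_Icc.mpr ⟨hk'.1, by omega⟩) hw'
          obtain ⟨k, hk, hu'⟩ := Set.mem_iUnion₂.mp hu
          obtain ⟨hk1, hk2⟩ := Finset.mem_Icc.mp hk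
          have hkij : k ∈ Finset.Icc i j := Finset.mem_Icc.mpr ⟨hk1, by omega⟩
          obtain ⟨hx1, hx2, hx3⟩ := htm k hkij
          obtain ⟨-, hwalk⟩ := aux_connected_induce_iff.mp hx3
          obtain ⟨p1, hp1⟩ := hwalk u hu' (x k) hx1
          have hsub1 : t'' k ⊆ ⋃ m ∈ Finset.Icc i (j' + 1), t'' m :=
            Set.subset_biUnion_of_mem (u := t'') hk
          by_cases hkj' : k ≤ j'
          · obtain ⟨p2, hp2⟩ := ih (by omega) (x k)
              (Set.mem_biUnion (Finset.mem_Icc.mpr ⟨hk1, hkj'⟩) hx1)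
            refine ⟨p1.append p2, ?_⟩
            intro w hw
            rcases (Walk.mem_support_append_iff _ _).mp hw with h | h
            · exact hsub1 (hp1 w h)
            · exact hUsub (hp2 w h)
          · -- k = j' + 1
            have hkeq : k = j' + 1 := by omega
            subst hkeq
            have hj'i : i ≤ j' := hij'
            have hj'mem : j' ∈ Finset.Icc i j := Finset.mem_Icc.mpr ⟨hj'i, by omega⟩
            obtain ⟨hy1, hy2, hy3⟩ := htm j' hj'mem
            obtain ⟨p2, hp2⟩ := ih (by omega) (x j')
              (Set.mem_biUnion (Finset.mem_Icc.mpr ⟨hj'i, le_rfl⟩) hy1)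
            have hadjk : T.Adj (x (j' + 1)) (x j') := (hadj j' (by omega)).symm
            refine ⟨p1.append (Walk.cons hadjk p2), ?_⟩
            intro w hw
            rcases (Walk.mem_support_append_iff _ _).mp hw with h | h
            · exact hsub1 (hp1 w h)
            · rw [Walk.support_cons] at h
              rcases List.mem_cons.mp h with h | h
              · rw [h]
                exact hsub1 hx1
              · exact hUsub (hp2 w h)
      set s : Set V := ⋃ m ∈ Finset.Icc i j, t'' m with hsdef
      have hxii : x i ∈ s := Set.mem_biUnion (Finset.mem_Icc.mpr ⟨le_rfl, hij⟩)
        (htm i (Finset.mem_Icc.mpr ⟨le_rfl, hij⟩)).1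
      have hsconn : (T.induce s).Connected := by
        rw [aux_connected_induce_iff]
        refine ⟨⟨x i, hxii⟩, ?_⟩
        intro u hu v hv
        obtain ⟨p1, hp1⟩ := hwx j hij le_rfl u hu
        obtain ⟨p2, hp2⟩ := hwx j hij le_rfl v hv
        refine ⟨p1.append p2.reverse, ?_⟩
        intro w hw
        rcases (Walk.mem_support_append_iff _ _).mp hw with h | h
        · exact hp1 w h
        · rw [Walk.support_reverse] at h
          exact hp2 w (List.mem_reverse.mp h)
      have hscond : ∀ m, 1 ≤ m → m ≤ n → (x m ∈ s ↔ i ≤ m ∧ m ≤ j) := by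
        intro m hm1 hm2
        constructor
        · intro hxm
          obtain ⟨k, hk, hxm'⟩ := Set.mem_iUnion₂.mp hxm
          obtain ⟨hk1, hk2⟩ := Finset.mem_Icc.mp hk
          have hkX : x m ∈ X k := (htm k hk).2.1 hxm'
          have : m = k := hxmem m k hm1 hm2 (by omega) (by omega) hkX
          omega
        · rintro ⟨h1, h2⟩
          exact Set.mem_biUnion (Finset.mem_Icc.mpr ⟨h1, h2⟩)
            (htm m (Finset.mem_Icc.mpr ⟨h1, h2⟩)).1
      refine ⟨s, ⟨hsconn, hscond⟩, ?_⟩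
      funext m
      obtain ⟨hm1, hm2⟩ := hbound m
      have hmn1 : 1 ≤ (m : ℕ) := by omega
      have hmn2 : (m : ℕ) ≤ n := by omega
      ext v
      constructor
      · rintro ⟨hvs, hvX⟩
        obtain ⟨k, hk, hv'⟩ := Set.mem_iUnion₂.mp hvs
        obtain ⟨hk1, hk2⟩ := Finset.mem_Icc.mp hk
        have hvXk : v ∈ X k := (htm k hk).2.1 hv'
        have hkm : k = ↑m := by
          by_contra hne
          exact hXd k ↑m (by omega) (by omega) (by omega) (by omega) hne v hvXk hvX
        rw [ht''eq k hk] at hv'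
        have hmk : (⟨k, hk⟩ : ↥(Finset.Icc i j)) = m := Subtype.ext hkm
        rw [← hmk]
        exact hv'
      · intro hv
        have hmm : (m : ℕ) ∈ Finset.Icc i j := m.2
        have ht'' : t'' ↑m = t m := by
          rw [ht''eq ↑m hmm]
        refine ⟨Set.mem_biUnion hmm ?_, ?_⟩
        · rw [ht'']
          exact hv
        · have := ht m (Set.mem_univ _)
          exact this.2.1 (by rw [← ht''] at hv ⊢; exact hv)
    -- assemble the count
    have himg : φ '' (SS i j) = Set.univ.pi ts := by
      apply Set.Subset.antisymm
      · rintro f ⟨s, hs, rfl⟩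
        exact fun m _ => hmaps s hs m
      · intro t ht
        obtain ⟨s, hs, hst⟩ := hsurj t ht
        exact ⟨s, hs, hst⟩
    calc (SS i j).ncard = (φ '' SS i j).ncard := (Set.ncard_image_of_injOn hinj2).symm
      _ = (Set.univ.pi ts).ncard := by rw [himg]
      _ = ∏ m : ↥(Finset.Icc i j), (ts m).ncard := ncard_pi_univ ts
      _ = ∏ m : ↥(Finset.Icc i j), C ↑m := by
          refine Finset.prod_congr rfl ?_
          intro m _
          obtain ⟨hm1, hm2⟩ := hbound m
          exact (hCval ↑m (Finset.mem_Icc.mpr ⟨by omega, by omega⟩)).symm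
      _ = ∏ m ∈ Finset.Icc i j, C m := Finset.prod_coe_sort _ _
  -- the partition
  set Sig : Finset ((_ : ℕ) × ℕ) := (Finset.Icc 1 n).sigma (fun i => Finset.Icc i n) with hSig
  have hSigmem : ∀ p : (_ : ℕ) × ℕ, p ∈ Sig ↔ (1 ≤ p.1 ∧ p.1 ≤ p.2 ∧ p.2 ≤ n) := by
    intro p
    rw [hSig, Finset.mem_sigma, Finset.mem_Icc, Finset.mem_Icc]
    omega
  have hcover : {s : Set V | s.Nonempty ∧ (T.induce s).Connected} =
      (⋃ p ∈ Sig, SS p.1 p.2) ∪ (⋃ m ∈ Finset.Icc 1 n, R m) := by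
    ext s
    constructor
    · rintro ⟨hne, hconn⟩
      by_cases hex : ∃ m, 1 ≤ m ∧ m ≤ n ∧ x m ∈ s
      · left
        set I : Finset ℕ := (Finset.Icc 1 n).filter (fun m => x m ∈ s) with hI
        have hIne : I.Nonempty := by
          obtain ⟨m, h1, h2, h3⟩ := hex
          exact ⟨m, Finset.mem_filter.mpr ⟨Finset.mem_Icc.mpr ⟨h1, h2⟩, h3⟩⟩
        set i := I.min' hIne with hidef
        set j := I.max' hIne with hjdef
        have hiI : i ∈ I := I.min'_mem hIne
        have hjI : j ∈ I := I.max'_mem hIne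
        obtain ⟨hiIcc, hixs⟩ := Finset.mem_filter.mp hiI
        obtain ⟨hjIcc, hjxs⟩ := Finset.mem_filter.mp hjI
        obtain ⟨hi1, hi2⟩ := Finset.mem_Icc.mp hiIcc
        obtain ⟨hj1, hj2⟩ := Finset.mem_Icc.mp hjIcc
        have hij : i ≤ j := I.min'_le j hjI
        refine Set.mem_biUnion ((hSigmem ⟨i, j⟩).mpr ⟨hi1, hij, hj2⟩) ?_
        refine ⟨hconn, ?_⟩
        intro m hm1 hm2
        constructor
        · intro hxm
          have hmI : m ∈ I := Finset.mem_filter.mpr ⟨Finset.mem_Icc.mpr ⟨hm1, hm2⟩, hxm⟩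
          exact ⟨I.min'_le m hmI, I.le_max' m hmI⟩
        · rintro ⟨h1, h2⟩
          exact hIv s hconn i j m h1 h2 (by omega) hixs hjxs
      · right
        push_neg at hex
        have hne2 := hne
        obtain ⟨v, hv⟩ := hne2
        obtain ⟨m, hm1, hm2, hvm⟩ := hcov v
        refine Set.mem_biUnion (Finset.mem_Icc.mpr ⟨hm1, hm2⟩) ?_
        refine ⟨hne, ?_, hconn, hex m hm1 hm2⟩
        intro w hw
        obtain ⟨k, hk1, hk2, hwk⟩ := hcov w
        by_cases hkm : k = m
        · exact hkm ▸ hwk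
        · exfalso
          obtain ⟨-, hwalk⟩ := aux_connected_induce_iff.mp hconn
          obtain ⟨p, hp⟩ := hwalk v hv w hw
          have hvnot : v ∉ X k := fun hc =>
            hXd m k hm1 hm2 hk1 hk2 (fun h => hkm h.symm) v hvm hc
          exact hex k hk1 hk2 (hp _ (hL1 k hk1 hk2 p hvnot hwk))
    · rintro (hA | hB)
      · obtain ⟨p, hp, hs⟩ := Set.mem_iUnion₂.mp hA
        obtain ⟨hp1, hp2, hp3⟩ := (hSigmem p).mp hp
        obtain ⟨hconn, hcond⟩ := hs
        exact ⟨⟨x p.1, (hcond p.1 hp1 (by omega)).mpr ⟨le_rfl, hp2⟩⟩, hconn⟩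
      · obtain ⟨m, hm, hs⟩ := Set.mem_iUnion₂.mp hB
        exact ⟨hs.1, hs.2.2.1⟩
  -- disjointness
  have hdA : ∀ p ∈ Sig, ∀ q ∈ Sig, p ≠ q → Disjoint (SS p.1 p.2) (SS q.1 q.2) := by
    rintro ⟨i1, j1⟩ hp ⟨i2, j2⟩ hq hpq
    obtain ⟨ha1, ha2, ha3⟩ := (hSigmem _).mp hp
    obtain ⟨hb1, hb2, hb3⟩ := (hSigmem _).mp hq
    simp only at ha1 ha2 ha3 hb1 hb2 hb3
    rw [Set.disjoint_left]
    rintro s ⟨hc1, hcond1⟩ ⟨hc2, hcond2⟩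
    have e1 : x i1 ∈ s := (hcond1 i1 ha1 (by omega)).mpr ⟨le_rfl, ha2⟩
    have e2 : x i2 ∈ s := (hcond2 i2 hb1 (by omega)).mpr ⟨le_rfl, hb2⟩
    have e3 : x j1 ∈ s := (hcond1 j1 (by omega) ha3).mpr ⟨ha2, le_rfl⟩
    have e4 : x j2 ∈ s := (hcond2 j2 (by omega) hb3).mpr ⟨hb2, le_rfl⟩
    have c1 := (hcond2 i1 ha1 (by omega)).mp e1
    have c2 := (hcond1 i2 hb1 (by omega)).mp e2
    have c3 := (hcond2 j1 (by omega) ha3).mp e3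
    have c4 := (hcond1 j2 (by omega) hb3).mp e4
    dsimp only at c1 c2 c3 c4
    apply hpq
    have hi : i1 = i2 := by omega
    have hj : j1 = j2 := by omega
    subst hi; subst hj; rfl
  have hdB : ∀ m ∈ Finset.Icc 1 n, ∀ k ∈ Finset.Icc 1 n, m ≠ k → Disjoint (R m) (R k) := by
    intro m hm k hk hmk
    obtain ⟨hm1, hm2⟩ := Finset.mem_Icc.mp hm
    obtain ⟨hk1, hk2⟩ := Finset.mem_Icc.mp hk
    rw [Set.disjoint_left]
    rintro s ⟨⟨v, hv⟩, hsub1, -, -⟩ ⟨-, hsub2, -, -⟩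
    exact hXd m k hm1 hm2 hk1 hk2 hmk v (hsub1 hv) (hsub2 hv)
  have hAB : Disjoint (⋃ p ∈ Sig, SS p.1 p.2) (⋃ m ∈ Finset.Icc 1 n, R m) := by
    rw [Set.disjoint_left]
    intro s hsA hsB
    obtain ⟨p, hp, hs1⟩ := Set.mem_iUnion₂.mp hsA
    obtain ⟨m, hm, hs2⟩ := Set.mem_iUnion₂.mp hsB
    obtain ⟨hp1, hp2, hp3⟩ := (hSigmem p).mp hp
    obtain ⟨hm1, hm2⟩ := Finset.mem_Icc.mp hm
    obtain ⟨hconn, hcond⟩ := hs1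
    obtain ⟨-, hsub, -, hxm⟩ := hs2
    have hx1 : x p.1 ∈ s := (hcond p.1 hp1 (by omega)).mpr ⟨le_rfl, hp2⟩
    have : p.1 = m := hxmem p.1 m hp1 (by omega) hm1 hm2 (hsub hx1)
    exact hxm (this ▸ hx1)
  -- assemble
  have hAcard : (⋃ p ∈ Sig, SS p.1 p.2).ncard = ∑ p ∈ Sig, (SS p.1 p.2).ncard :=
    ncard_biUnion_finset Sig _ hdA
  have hBcard : (⋃ m ∈ Finset.Icc 1 n, R m).ncard = ∑ m ∈ Finset.Icc 1 n, (R m).ncard :=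
    ncard_biUnion_finset _ _ hdB
  have hmain : numSubtrees T = (∑ p ∈ Sig, (SS p.1 p.2).ncard) +
      ∑ m ∈ Finset.Icc 1 n, (R m).ncard := by
    rw [numSubtrees, hcover, Set.ncard_union_eq hAB (Set.toFinite _) (Set.toFinite _),
      hAcard, hBcard]
  rw [hmain]
  congr 1
  · rw [hSig, Finset.sum_sigma]
    refine Finset.sum_congr rfl ?_
    intro i hi
    refine Finset.sum_congr rfl ?_
    intro j hj
    obtain ⟨hi1, hi2⟩ := Finset.mem_Icc.mp hi
    obtain ⟨hj1, hj2⟩ := Finset.mem_Icc.mp hj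
    exact hSijcard i j hi1 hj1 hj2
  · exact Finset.sum_congr rfl hRval
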